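/- (Revenue formula underlying Proposition 2.) Let d : [0,1]×[0,1] → ℝ be continuous with d(x,y) > 0 whenever x ≠ y, let d^pass(a) = ∫₀^a ∫_a¹ d(x,y) dy dx + ∫_a¹ ∫₀^a d(x,y) dy dx, let h : [0,1] → ℝ be nonnegative (representing a ↦ φ(λ(a))), and suppose the function a ↦ h(a)/d^pass(a) is integrable on [0,1]. Define q(x,y) = |∫_x^y h(a)/d^pass(a) da| and the incentive-compatible price p*(x,y) = α·q(x,y) with α > 0. Then the total revenue satisfies ∫₀¹ ∫₀¹ d(x,y)·p*(x,y) dy dx = α·∫₀¹ h(a) da. In particular, the revenue under incentive-compatible pricing equals α times the total 'effective' mass ∫₀¹ φ(λ(a)) da of inspectors, and does not otherwise depend on the demand d. -/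

import Mathlib

open MeasureTheory

section Aux

/-- abs of indicator bounded by abs. -/
lemma aux_abs_indicator_le {s : Set ℝ} (g : ℝ → ℝ) (a : ℝ) :
    |Set.indicator s g a| ≤ |g a| := by
  by_cases ha : a ∈ s <;> simp [Set.indicator, ha, abs_nonneg]

/-- a.e.-strong measurability of a parametric slice integral of `d`. -/
lemma aux_aesm_slice {d : ℝ → ℝ → ℝ}
    (hd : ContinuousOn (fun p : ℝ × ℝ => d p.1 p.2) (Set.Icc 0 1 ×ˢ Set.Icc 0 1))
    {s t : Set ℝ} (hs : MeasurableSet s) (ht : MeasurableSet t)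
    (hs1 : s ⊆ Set.Icc 0 1) (ht1 : t ⊆ Set.Icc 0 1) :
    AEStronglyMeasurable (fun x => ∫ y in t, d x y) (volume.restrict s) := by
  have h2 : AEStronglyMeasurable (fun p : ℝ × ℝ => d p.1 p.2)
      ((volume.restrict s).prod (volume.restrict t)) := by
    rw [Measure.prod_restrict]
    exact (hd.mono (Set.prod_mono hs1 ht1)).aestronglyMeasurable (hs.prod ht)
  exact h2.integral_prod_right'

lemma aux_bound_slice {d : ℝ → ℝ → ℝ} {M : ℝ} (hM0 : 0 ≤ M)
    (hM : ∀ p ∈ Set.Icc (0:ℝ) 1 ×ˢ Set.Icc (0:ℝ) 1, |d p.1 p.2| ≤ M)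
    {t : Set ℝ} (ht : MeasurableSet t) (ht1 : t ⊆ Set.Icc 0 1)
    {x : ℝ} (hx : x ∈ Set.Icc (0:ℝ) 1) :
    |∫ y in t, d x y| ≤ M := by
  have hlt : volume t < ⊤ :=
    lt_of_le_of_lt (measure_mono ht1) (by simp [Real.volume_Icc])
  have h1 : ‖∫ y in t, d x y‖ ≤ M * (volume t).toReal := by
    refine norm_setIntegral_le_of_norm_le_const hlt fun y hy => ?_
    rw [Real.norm_eq_abs]
    exact hM (x, y) ⟨hx, ht1 hy⟩
  rw [Real.norm_eq_abs] at h1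
  refine h1.trans ?_
  have h2 : (volume t).toReal ≤ 1 := by
    have := measure_mono ht1 (μ := volume)
    rw [Real.volume_Icc] at this
    have h3 : volume t ≤ 1 := by simpa using this
    simpa using ENNReal.toReal_mono (by norm_num) h3
  nlinarith

lemma aux_int_slice {d : ℝ → ℝ → ℝ} {M : ℝ} (hM0 : 0 ≤ M)
    (hd : ContinuousOn (fun p : ℝ × ℝ => d p.1 p.2) (Set.Icc 0 1 ×ˢ Set.Icc 0 1))
    (hM : ∀ p ∈ Set.Icc (0:ℝ) 1 ×ˢ Set.Icc (0:ℝ) 1, |d p.1 p.2| ≤ M)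
    {s t : Set ℝ} (hs : MeasurableSet s) (ht : MeasurableSet t)
    (hs1 : s ⊆ Set.Icc 0 1) (ht1 : t ⊆ Set.Icc 0 1) :
    IntegrableOn (fun x => ∫ y in t, d x y) s := by
  haveI : IsFiniteMeasure (volume.restrict s) := by
    constructor
    rw [Measure.restrict_apply_univ]
    exact lt_of_le_of_lt (measure_mono hs1) (by simp [Real.volume_Icc])
  refine Integrable.mono' (integrable_const M) (aux_aesm_slice hd hs ht hs1 ht1) ?_
  refine (ae_restrict_mem hs).mono fun x hx => ?_
  rw [Real.norm_eq_abs]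
  exact aux_bound_slice hM0 hM ht ht1 (hs1 hx)

end Aux

/-- Revenue formula underlying Proposition 2: under the incentive-compatible
pricing scheme `p*(x,y) = α·|∫_x^y h(a)/d^pass(a) da|`, the total revenue
equals `α` times the total effective mass `∫₀¹ h(a) da` of inspectors, and
does not otherwise depend on the demand `d`. -/
theorem revenue_formula
    (d : ℝ → ℝ → ℝ)
    (hd : ContinuousOn (fun p : ℝ × ℝ => d p.1 p.2) (Set.Icc 0 1 ×ˢ Set.Icc 0 1))
    (hd_pos : ∀ x ∈ Set.Icc (0:ℝ) 1, ∀ y ∈ Set.Icc (0:ℝ) 1, x ≠ y → 0 < d x y)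
    (dpass : ℝ → ℝ)
    (hdpass : ∀ a, dpass a =
      (∫ x in (0:ℝ)..a, ∫ y in a..(1:ℝ), d x y)
        + ∫ x in a..(1:ℝ), ∫ y in (0:ℝ)..a, d x y)
    (h : ℝ → ℝ) (hh_nonneg : ∀ a ∈ Set.Icc (0:ℝ) 1, 0 ≤ h a)
    (hint : IntegrableOn (fun a => h a / dpass a) (Set.Icc 0 1))
    (q : ℝ → ℝ → ℝ)
    (hq : ∀ x y, q x y = |∫ a in x..y, h a / dpass a|)
    (α : ℝ) (hα : 0 < α)
    (p : ℝ → ℝ → ℝ) (hp : ∀ x y, p x y = α * q x y) :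
    (∫ x in (0:ℝ)..1, ∫ y in (0:ℝ)..1, d x y * p x y)
      = α * ∫ a in (0:ℝ)..1, h a := by
  have h01 : (0:ℝ) ≤ 1 := zero_le_one
  set μ : Measure ℝ := volume.restrict (Set.Icc 0 1) with hμ
  set g : ℝ → ℝ := fun a => h a / dpass a with hgdef
  -- bound on d
  obtain ⟨M, hM⟩ : ∃ M, ∀ p ∈ Set.Icc (0:ℝ) 1 ×ˢ Set.Icc (0:ℝ) 1, |d p.1 p.2| ≤ M := by
    obtain ⟨C, hC⟩ := (isCompact_Icc.prod isCompact_Icc).exists_bound_of_continuousOn hd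
    exact ⟨C, fun p hp => by simpa [Real.norm_eq_abs] using hC p hp⟩
  have hM0 : 0 ≤ M :=
    le_trans (abs_nonneg _) (hM ((0:ℝ), (0:ℝ)) (by simp [Set.mem_Icc]))
  -- continuity of slices
  have hd_cont_x : ∀ x ∈ Set.Icc (0:ℝ) 1, ContinuousOn (fun y => d x y) (Set.Icc 0 1) := by
    intro x hx
    have : ContinuousOn ((fun p : ℝ × ℝ => d p.1 p.2) ∘ (fun y => (x, y))) (Set.Icc 0 1) :=
      hd.comp (Continuous.continuousOn (by fun_prop)) (fun y hy => ⟨hx, hy⟩)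
    exact this
  -- positivity of dpass on (0,1)
  have dpass_pos : ∀ a ∈ Set.Ioo (0:ℝ) 1, 0 < dpass a := by
    rintro a ⟨ha0, ha1⟩
    rw [hdpass a]
    have hterm1 : 0 < ∫ x in (0:ℝ)..a, ∫ y in a..(1:ℝ), d x y := by
      refine intervalIntegral.intervalIntegral_pos_of_pos_on ?_ ?_ ha0
      · rw [intervalIntegrable_iff_integrableOn_Ioc_of_le ha0.le]
        have heq : ∀ x, (∫ y in a..(1:ℝ), d x y) = ∫ y in Set.Ioc a 1, d x y := by
          intro x; rw [intervalIntegral.integral_of_le ha1.le]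
        simp only [heq]
        exact aux_int_slice hM0 hd hM measurableSet_Ioc measurableSet_Ioc
          (Set.Ioc_subset_Icc_self.trans (Set.Icc_subset_Icc le_rfl ha1.le))
          (Set.Ioc_subset_Icc_self.trans (Set.Icc_subset_Icc ha0.le le_rfl))
      · rintro x ⟨hx0, hxa⟩
        have hx1 : x ∈ Set.Icc (0:ℝ) 1 := ⟨hx0.le, (hxa.trans ha1).le⟩
        refine intervalIntegral.intervalIntegral_pos_of_pos_on ?_ ?_ ha1
        · exact ((hd_cont_x x hx1).mono (Set.Icc_subset_Icc ha0.le le_rfl)).intervalIntegrable_of_Icc ha1.le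
        · rintro y ⟨hay, hy1⟩
          exact hd_pos x hx1 y ⟨(ha0.trans hay).le, hy1.le⟩ (ne_of_lt (hxa.trans hay))
    have hterm2 : 0 < ∫ x in a..(1:ℝ), ∫ y in (0:ℝ)..a, d x y := by
      refine intervalIntegral.intervalIntegral_pos_of_pos_on ?_ ?_ ha1
      · rw [intervalIntegrable_iff_integrableOn_Ioc_of_le ha1.le]
        have heq : ∀ x, (∫ y in (0:ℝ)..a, d x y) = ∫ y in Set.Ioc 0 a, d x y := by
          intro x; rw [intervalIntegral.integral_of_le ha0.le]
        simp only [heq]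
        exact aux_int_slice hM0 hd hM measurableSet_Ioc measurableSet_Ioc
          (Set.Ioc_subset_Icc_self.trans (Set.Icc_subset_Icc ha0.le le_rfl))
          (Set.Ioc_subset_Icc_self.trans (Set.Icc_subset_Icc le_rfl ha1.le))
      · rintro x ⟨hax, hx1⟩
        have hx01 : x ∈ Set.Icc (0:ℝ) 1 := ⟨(ha0.trans hax).le, hx1.le⟩
        refine intervalIntegral.intervalIntegral_pos_of_pos_on ?_ ?_ ha0
        · exact ((hd_cont_x x hx01).mono (Set.Icc_subset_Icc le_rfl ha1.le)).intervalIntegrable_of_Icc ha0.le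
        · rintro y ⟨hy0, hya⟩
          exact hd_pos x hx01 y ⟨hy0.le, (hya.trans ha1).le⟩ (ne_of_gt (hya.trans hax))
    linarith
  -- measurable representative of g
  have hgint : Integrable g μ := hint
  set g' : ℝ → ℝ := hgint.1.mk g with hg'def
  have hg'sm : StronglyMeasurable g' := hgint.1.stronglyMeasurable_mk
  have hgg' : g =ᵐ[μ] g' := hgint.1.ae_eq_mk
  have hg'int : Integrable g' μ := hgint.congr hgg'
  -- a.e. membership in the open interval
  have hae_Ioo : ∀ᵐ a ∂μ, a ∈ Set.Ioo (0:ℝ) 1 := by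
    have hIoo : (Set.Ioo (0:ℝ) 1 : Set ℝ) =ᵐ[volume] Set.Icc 0 1 := Ioo_ae_eq_Icc
    rw [hμ, ← Measure.restrict_congr_set hIoo]
    exact ae_restrict_mem measurableSet_Ioo
  have hg_nn : ∀ a ∈ Set.Ioo (0:ℝ) 1, 0 ≤ g a := fun a ha =>
    div_nonneg (hh_nonneg a (Set.Ioo_subset_Icc_self ha)) (dpass_pos a ha).le
  have hg'_nn : ∀ᵐ a ∂μ, 0 ≤ g' a := by
    filter_upwards [hae_Ioo, hgg'] with a ha hga
    rw [← hga]; exact hg_nn a ha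
  -- key rewriting of q
  have key_q : ∀ x ∈ Set.Icc (0:ℝ) 1, ∀ y ∈ Set.Icc (0:ℝ) 1,
      |∫ a in x..y, g a| = ∫ a, (Set.uIoc x y).indicator g' a ∂μ := by
    intro x hx y hy
    have hsub : Set.uIoc x y ⊆ Set.Icc 0 1 :=
      Set.uIoc_subset_uIcc.trans (Set.uIcc_subset_Icc hx hy)
    have h1 : (∫ a in x..y, g a) = ∫ a in x..y, g' a := by
      refine intervalIntegral.integral_congr_ae ?_
      exact ae_imp_of_ae_restrict (ae_restrict_of_ae_restrict_of_subset hsub hgg')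
    have h2 : (∫ a, (Set.uIoc x y).indicator g' a ∂μ) = ∫ a in Set.uIoc x y, g' a := by
      rw [hμ, integral_indicator measurableSet_uIoc,
        Measure.restrict_restrict measurableSet_uIoc,
        Set.inter_eq_self_of_subset_left hsub]
    have h3 : 0 ≤ ∫ a in Set.uIoc x y, g' a := by
      refine integral_nonneg_of_ae ?_
      have := ae_restrict_of_ae_restrict_of_subset hsub hg'_nn
      exact this
    rcases le_total x y with hxy | hxy
    · rw [h1, h2, intervalIntegral.integral_of_le hxy, Set.uIoc_of_le hxy]
      exact abs_of_nonneg (by rw [← Set.uIoc_of_le hxy] at *; exact h3)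
    · rw [h1, h2, intervalIntegral.integral_of_ge hxy, Set.uIoc_of_ge hxy, abs_neg]
      exact abs_of_nonneg (by rw [← Set.uIoc_of_ge hxy] at *; exact h3)
  -- the triple kernel
  set H : ℝ → ℝ → ℝ → ℝ := fun x y a => d x y * (Set.uIoc x y).indicator g' a with hHdef
  -- Step B: rewrite revenue as a triple integral
  have stepB : (∫ x in (0:ℝ)..1, ∫ y in (0:ℝ)..1, d x y * p x y)
      = α * ∫ x, (∫ y, (∫ a, H x y a ∂μ) ∂μ) ∂μ := by
    have inner_eq : ∀ x ∈ Set.Icc (0:ℝ) 1,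
        (∫ y in (0:ℝ)..1, d x y * p x y) = α * ∫ y, (∫ a, H x y a ∂μ) ∂μ := by
      intro x hx
      rw [intervalIntegral.integral_of_le h01, ← integral_Icc_eq_integral_Ioc,
        ← integral_const_mul]
      refine setIntegral_congr_fun measurableSet_Icc fun y hy => ?_
      have hstep : d x y * p x y = α * (d x y * |∫ a in x..y, g a|) := by
        rw [hp, hq]; ring
      rw [hstep, key_q x hx y hy]
      congr 1
      rw [← integral_const_mul]
    rw [intervalIntegral.integral_of_le h01, ← integral_Icc_eq_integral_Ioc,
      ← integral_const_mul]
    exact setIntegral_congr_fun measurableSet_Icc fun x hx => inner_eq x hx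
  haveI hμfin : IsFiniteMeasure μ := by
    constructor
    rw [hμ, Measure.restrict_apply_univ, Real.volume_Icc]
    exact ENNReal.ofReal_lt_top
  have hprod2 : μ.prod μ = ((volume : Measure ℝ).prod volume).restrict
      ((Set.Icc 0 1) ×ˢ (Set.Icc 0 1)) := by rw [hμ, Measure.prod_restrict]
  have hbd1 : Integrable (fun z : ℝ × ℝ => M * |g' z.2|) (μ.prod μ) := by
    simpa using (integrable_const M).mul_prod hg'int.abs
  -- swap 1 integrability
  have int1 : ∀ x ∈ Set.Icc (0:ℝ) 1,
      Integrable (Function.uncurry fun y a => H x y a) (μ.prod μ) := by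
    intro x hx
    have hS : MeasurableSet {z : ℝ × ℝ | z.2 ∈ Set.uIoc x z.1} := by
      have hset : {z : ℝ × ℝ | z.2 ∈ Set.uIoc x z.1}
          = {z : ℝ × ℝ | x ⊓ z.1 < z.2} ∩ {z : ℝ × ℝ | z.2 ≤ x ⊔ z.1} := by
        ext z; simp [Set.uIoc, Set.mem_Ioc, Set.mem_inter_iff]
      rw [hset]
      exact (measurableSet_lt (measurable_const.min measurable_fst) measurable_snd).inter
        (measurableSet_le measurable_snd (measurable_const.max measurable_fst))
    have haesm : AEStronglyMeasurable (Function.uncurry fun y a => H x y a) (μ.prod μ) := by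
      have h1 : AEStronglyMeasurable (fun z : ℝ × ℝ => d x z.1) (μ.prod μ) := by
        rw [hprod2]
        refine ContinuousOn.aestronglyMeasurable ?_ (measurableSet_Icc.prod measurableSet_Icc)
        have hcont : Continuous (fun z : ℝ × ℝ => (x, z.1)) := by fun_prop
        exact hd.comp hcont.continuousOn (fun z hz => ⟨hx, hz.1⟩)
      have h2 : StronglyMeasurable (fun z : ℝ × ℝ => (Set.uIoc x z.1).indicator g' z.2) := by
        have hfe : (fun z : ℝ × ℝ => (Set.uIoc x z.1).indicator g' z.2)
            = Set.indicator {z : ℝ × ℝ | z.2 ∈ Set.uIoc x z.1} (fun z => g' z.2) := by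
          funext z; by_cases hz : z.2 ∈ Set.uIoc x z.1 <;> simp [Set.indicator, hz]
        rw [hfe]
        exact (hg'sm.comp_measurable measurable_snd).indicator hS
      have : Function.uncurry (fun y a => H x y a)
          = fun z : ℝ × ℝ => d x z.1 * (Set.uIoc x z.1).indicator g' z.2 := by
        funext z; simp only [Function.uncurry, hHdef]
      rw [this]
      exact h1.mul h2.aestronglyMeasurable
    refine Integrable.mono' hbd1 haesm ?_
    rw [hprod2]
    refine (ae_restrict_mem (measurableSet_Icc.prod measurableSet_Icc)).mono fun z hz => ?_
    have hzeq : Function.uncurry (fun y a => H x y a) z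
        = d x z.1 * (Set.uIoc x z.1).indicator g' z.2 := by
      simp only [Function.uncurry, hHdef]
    rw [hzeq, Real.norm_eq_abs, abs_mul]
    exact mul_le_mul (hM (x, z.1) ⟨hx, hz.1⟩) (aux_abs_indicator_le g' z.2) (abs_nonneg _) hM0
  have swap1 : ∀ x ∈ Set.Icc (0:ℝ) 1,
      (∫ y, (∫ a, H x y a ∂μ) ∂μ) = ∫ a, (∫ y, H x y a ∂μ) ∂μ := fun x hx =>
    integral_integral_swap (int1 x hx)
  -- swap 2 integrability
  have intT : Integrable (fun w : (ℝ × ℝ) × ℝ => H w.1.1 w.2 w.1.2) ((μ.prod μ).prod μ) := by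
    have hprod3 : (μ.prod μ).prod μ
        = (((volume : Measure ℝ).prod volume).prod volume).restrict
            (((Set.Icc 0 1) ×ˢ (Set.Icc 0 1)) ×ˢ (Set.Icc 0 1)) := by
      rw [hprod2, hμ, Measure.prod_restrict]
    have hS : MeasurableSet {w : (ℝ × ℝ) × ℝ | w.1.2 ∈ Set.uIoc w.1.1 w.2} := by
      have hset : {w : (ℝ × ℝ) × ℝ | w.1.2 ∈ Set.uIoc w.1.1 w.2}
          = {w : (ℝ × ℝ) × ℝ | w.1.1 ⊓ w.2 < w.1.2}
            ∩ {w : (ℝ × ℝ) × ℝ | w.1.2 ≤ w.1.1 ⊔ w.2} := by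
        ext w; simp [Set.uIoc, Set.mem_Ioc, Set.mem_inter_iff]
      rw [hset]
      exact (measurableSet_lt (measurable_fst.fst.min measurable_snd) measurable_fst.snd).inter
        (measurableSet_le measurable_fst.snd (measurable_fst.fst.max measurable_snd))
    have haesm : AEStronglyMeasurable (fun w : (ℝ × ℝ) × ℝ => H w.1.1 w.2 w.1.2)
        ((μ.prod μ).prod μ) := by
      have h1 : AEStronglyMeasurable (fun w : (ℝ × ℝ) × ℝ => d w.1.1 w.2)
          ((μ.prod μ).prod μ) := by
        rw [hprod3]
        refine ContinuousOn.aestronglyMeasurable ?_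
          ((measurableSet_Icc.prod measurableSet_Icc).prod measurableSet_Icc)
        have hcont : Continuous (fun w : (ℝ × ℝ) × ℝ => (w.1.1, w.2)) := by fun_prop
        exact hd.comp hcont.continuousOn (fun w hw => ⟨hw.1.1, hw.2⟩)
      have h2 : StronglyMeasurable
          (fun w : (ℝ × ℝ) × ℝ => (Set.uIoc w.1.1 w.2).indicator g' w.1.2) := by
        have hfe : (fun w : (ℝ × ℝ) × ℝ => (Set.uIoc w.1.1 w.2).indicator g' w.1.2)
            = Set.indicator {w : (ℝ × ℝ) × ℝ | w.1.2 ∈ Set.uIoc w.1.1 w.2}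
                (fun w => g' w.1.2) := by
          funext w; by_cases hw : w.1.2 ∈ Set.uIoc w.1.1 w.2 <;> simp [Set.indicator, hw]
        rw [hfe]
        exact (hg'sm.comp_measurable measurable_fst.snd).indicator hS
      have hfe2 : (fun w : (ℝ × ℝ) × ℝ => H w.1.1 w.2 w.1.2)
          = fun w : (ℝ × ℝ) × ℝ =>
              d w.1.1 w.2 * (Set.uIoc w.1.1 w.2).indicator g' w.1.2 := by
        funext w; simp only [hHdef]
      rw [hfe2]
      exact h1.mul h2.aestronglyMeasurable
    have hbd3 : Integrable (fun w : (ℝ × ℝ) × ℝ => M * |g' w.1.2|) ((μ.prod μ).prod μ) := by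
      simpa using hbd1.mul_prod (integrable_const (1:ℝ))
    refine Integrable.mono' hbd3 haesm ?_
    have hrw : (μ.prod μ).prod μ
        = (((volume : Measure ℝ).prod volume).prod volume).restrict
            (((Set.Icc 0 1) ×ˢ (Set.Icc 0 1)) ×ˢ (Set.Icc 0 1)) := by
      rw [hprod2, hμ, Measure.prod_restrict]
    rw [hrw]
    refine (ae_restrict_mem
      ((measurableSet_Icc.prod measurableSet_Icc).prod measurableSet_Icc)).mono fun w hw => ?_
    have hweq : H w.1.1 w.2 w.1.2
        = d w.1.1 w.2 * (Set.uIoc w.1.1 w.2).indicator g' w.1.2 := by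
      simp only [hHdef]
    rw [hweq, Real.norm_eq_abs, abs_mul]
    exact mul_le_mul (hM (w.1.1, w.2) ⟨hw.1.1, hw.2⟩) (aux_abs_indicator_le g' w.1.2)
      (abs_nonneg _) hM0
  have int2 : Integrable (Function.uncurry fun x a => ∫ y, H x y a ∂μ) (μ.prod μ) := by
    have := intT.integral_prod_left
    exact this
  -- Step D : compute the inner double integral for a ∈ (0,1)
  have stepD : ∀ a ∈ Set.Ioo (0:ℝ) 1,
      (∫ x, (∫ y, H x y a ∂μ) ∂μ) = dpass a * g' a := by
    rintro a ⟨ha0, ha1⟩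
    set A : ℝ → ℝ := fun x => ∫ y in Set.Icc a 1, d x y with hAdef
    set B : ℝ → ℝ := fun x => ∫ y in Set.Ico 0 a, d x y with hBdef
    have hinner : ∀ x ∈ Set.Icc (0:ℝ) 1,
        (∫ y, H x y a ∂μ) = (if x < a then A x else B x) * g' a := by
      intro x hx
      by_cases hxa : x < a
      · have hmem : ∀ y : ℝ, a ∈ Set.uIoc x y ↔ a ≤ y := by
          intro y
          rw [Set.mem_uIoc]
          constructor
          · rintro (⟨_, h2⟩ | ⟨_, h2⟩)
            · exact h2
            · linarith
          · intro hy; exact Or.inl ⟨hxa, hy⟩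
        have hfun : ∀ y : ℝ, H x y a = (Set.Ici a).indicator (fun y => d x y * g' a) y := by
          intro y
          show d x y * (Set.uIoc x y).indicator g' a
            = (Set.Ici a).indicator (fun y => d x y * g' a) y
          by_cases hy : a ≤ y
          · rw [Set.indicator_of_mem ((hmem y).mpr hy),
              Set.indicator_of_mem (Set.mem_Ici.mpr hy)]
          · rw [Set.indicator_of_notMem (fun hm => hy ((hmem y).mp hm)),
              Set.indicator_of_notMem (fun hm => hy (Set.mem_Ici.mp hm)), mul_zero]
        rw [if_pos hxa]
        calc (∫ y, H x y a ∂μ)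
            = ∫ y, (Set.Ici a).indicator (fun y => d x y * g' a) y ∂μ :=
              integral_congr_ae (Filter.Eventually.of_forall hfun)
          _ = ∫ y in Set.Ici a, d x y * g' a ∂μ := integral_indicator measurableSet_Ici
          _ = ∫ y in Set.Ici a ∩ Set.Icc 0 1, d x y * g' a := by
              rw [hμ, Measure.restrict_restrict measurableSet_Ici]
          _ = ∫ y in Set.Icc a 1, d x y * g' a := by
              have hseteq : Set.Ici a ∩ Set.Icc 0 1 = Set.Icc a 1 := by
                ext z
                simp only [Set.mem_inter_iff, Set.mem_Ici, Set.mem_Icc]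
                constructor
                · rintro ⟨h1, _, h3⟩; exact ⟨h1, h3⟩
                · rintro ⟨h1, h2⟩; exact ⟨h1, le_trans ha0.le h1, h2⟩
              rw [hseteq]
          _ = A x * g' a := integral_mul_const _ _
      · have hax : a ≤ x := not_lt.mp hxa
        have hmem : ∀ y : ℝ, a ∈ Set.uIoc x y ↔ y < a := by
          intro y
          rw [Set.mem_uIoc]
          constructor
          · rintro (⟨h1, _⟩ | ⟨h1, _⟩)
            · linarith
            · exact h1
          · intro hy; exact Or.inr ⟨hy, hax⟩
        have hfun : ∀ y : ℝ, H x y a = (Set.Iio a).indicator (fun y => d x y * g' a) y := by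
          intro y
          show d x y * (Set.uIoc x y).indicator g' a
            = (Set.Iio a).indicator (fun y => d x y * g' a) y
          by_cases hy : y < a
          · rw [Set.indicator_of_mem ((hmem y).mpr hy),
              Set.indicator_of_mem (Set.mem_Iio.mpr hy)]
          · rw [Set.indicator_of_notMem (fun hm => hy ((hmem y).mp hm)),
              Set.indicator_of_notMem (fun hm => hy (Set.mem_Iio.mp hm)), mul_zero]
        rw [if_neg hxa]
        calc (∫ y, H x y a ∂μ)
            = ∫ y, (Set.Iio a).indicator (fun y => d x y * g' a) y ∂μ :=
              integral_congr_ae (Filter.Eventually.of_forall hfun)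
          _ = ∫ y in Set.Iio a, d x y * g' a ∂μ := integral_indicator measurableSet_Iio
          _ = ∫ y in Set.Iio a ∩ Set.Icc 0 1, d x y * g' a := by
              rw [hμ, Measure.restrict_restrict measurableSet_Iio]
          _ = ∫ y in Set.Ico 0 a, d x y * g' a := by
              have hseteq : Set.Iio a ∩ Set.Icc 0 1 = Set.Ico 0 a := by
                ext z
                simp only [Set.mem_inter_iff, Set.mem_Iio, Set.mem_Icc, Set.mem_Ico]
                constructor
                · rintro ⟨h1, h2, _⟩; exact ⟨h2, h1⟩
                · rintro ⟨h1, h2⟩; exact ⟨h2, h1, le_trans h2.le ha1.le⟩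
              rw [hseteq]
          _ = B x * g' a := integral_mul_const _ _
    have hsubIco : Set.Ico (0:ℝ) a ⊆ Set.Icc 0 1 := fun z hz =>
      ⟨hz.1, le_trans hz.2.le ha1.le⟩
    have hsubIcc : Set.Icc a 1 ⊆ Set.Icc (0:ℝ) 1 := Set.Icc_subset_Icc ha0.le le_rfl
    have hintA : IntegrableOn (fun x => A x * g' a) (Set.Ico 0 a) :=
      (aux_int_slice hM0 hd hM measurableSet_Ico measurableSet_Icc hsubIco hsubIcc).mul_const _
    have hintB : IntegrableOn (fun x => B x * g' a) (Set.Icc a 1) :=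
      (aux_int_slice hM0 hd hM measurableSet_Icc measurableSet_Ico hsubIcc
        (fun z hz => ⟨hz.1, le_trans hz.2.le ha1.le⟩)).mul_const _
    have hdisj : Disjoint (Set.Ico (0:ℝ) a) (Set.Icc a 1) := by
      rw [Set.disjoint_left]
      rintro z ⟨_, hz2⟩ ⟨hz3, _⟩
      linarith
    have hsplit : Set.Ico (0:ℝ) a ∪ Set.Icc a 1 = Set.Icc 0 1 :=
      Set.Ico_union_Icc_eq_Icc ha0.le ha1.le
    calc (∫ x, (∫ y, H x y a ∂μ) ∂μ)
        = ∫ x in Set.Icc (0:ℝ) 1, (if x < a then A x else B x) * g' a := by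
          rw [hμ]
          exact setIntegral_congr_fun measurableSet_Icc hinner
      _ = ∫ x in Set.Ico (0:ℝ) a ∪ Set.Icc a 1, (if x < a then A x else B x) * g' a := by
          rw [hsplit]
      _ = (∫ x in Set.Ico (0:ℝ) a, (if x < a then A x else B x) * g' a)
          + ∫ x in Set.Icc a 1, (if x < a then A x else B x) * g' a := by
          refine setIntegral_union hdisj measurableSet_Icc ?_ ?_
          · exact hintA.congr_fun (fun x hx => by rw [if_pos hx.2]) measurableSet_Ico
          · exact hintB.congr_fun (fun x hx => by rw [if_neg (not_lt.mpr hx.1)])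
              measurableSet_Icc
      _ = (∫ x in Set.Ico (0:ℝ) a, A x * g' a) + ∫ x in Set.Icc a 1, B x * g' a := by
          congr 1
          · exact setIntegral_congr_fun measurableSet_Ico fun x hx => by rw [if_pos hx.2]
          · exact setIntegral_congr_fun measurableSet_Icc fun x hx =>
              by rw [if_neg (not_lt.mpr hx.1)]
      _ = ((∫ x in Set.Ico (0:ℝ) a, A x) + ∫ x in Set.Icc a 1, B x) * g' a := by
          rw [integral_mul_const, integral_mul_const, add_mul]
      _ = dpass a * g' a := by
          congr 1
          rw [hdpass a]
          congr 1
          · rw [intervalIntegral.integral_of_le ha0.le, integral_Ico_eq_integral_Ioo,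
              integral_Ioc_eq_integral_Ioo]
            refine setIntegral_congr_fun measurableSet_Ioo fun x hx => ?_
            show (∫ y in Set.Icc a 1, d x y) = ∫ y in a..(1:ℝ), d x y
            rw [intervalIntegral.integral_of_le ha1.le, integral_Icc_eq_integral_Ioc]
          · rw [intervalIntegral.integral_of_le ha1.le, integral_Icc_eq_integral_Ioc]
            refine setIntegral_congr_fun measurableSet_Ioc fun x hx => ?_
            show (∫ y in Set.Ico 0 a, d x y) = ∫ y in (0:ℝ)..a, d x y
            rw [intervalIntegral.integral_of_le ha0.le, integral_Ico_eq_integral_Ioo,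
              integral_Ioc_eq_integral_Ioo]
  -- Step E : integrate over a
  have stepE : (∫ a, (∫ x, (∫ y, H x y a ∂μ) ∂μ) ∂μ) = ∫ a, h a ∂μ := by
    refine integral_congr_ae ?_
    filter_upwards [hae_Ioo, hgg'] with a ha hga
    rw [stepD a ha, ← hga, hgdef]
    have hne : dpass a ≠ 0 := (dpass_pos a ha).ne'
    field_simp
  -- conclusion
  rw [stepB]
  congr 1
  calc (∫ x, (∫ y, (∫ a, H x y a ∂μ) ∂μ) ∂μ)
      = ∫ x, (∫ a, (∫ y, H x y a ∂μ) ∂μ) ∂μ := by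
        rw [hμ]
        exact setIntegral_congr_fun measurableSet_Icc fun x hx => swap1 x hx
    _ = ∫ a, (∫ x, (∫ y, H x y a ∂μ) ∂μ) ∂μ := integral_integral_swap int2
    _ = ∫ a, h a ∂μ := stepE
    _ = ∫ a in (0:ℝ)..1, h a := by
        rw [intervalIntegral.integral_of_le h01, hμ, integral_Icc_eq_integral_Ioc]
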